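/- Let j : ℝᴺ → [0,∞] be measurable, even, with 0 < ∫ min{1,|z|²} j(z) dz < ∞. For a > 0 set Ω_a = (−a,a) × ℝ^{N−1} and C̃_a := ∫_{ℝᴺ∖Ω_{2a}} j(z) dz. Then ℰ_j(u,u) ≥ C̃_a ∫_{Ω_a} u² dx for every u ∈ 𝒟ʲ(Ω_a), and C̃_a → ∫_{ℝᴺ} j(z) dz as a → 0⁺. -/

import Mathlib

open MeasureTheory ENNReal Filter Topology

noncomputable section

/-- N-dimensional Euclidean space. -/
abbrev Euc (N : ℕ) := EuclideanSpace ℝ (Fin N)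

/-- The nonlocal quadratic form ℰ_j(u,u) = (1/2)∬ (u(x)-u(y))² j(x-y) dx dy. -/
def Ej {N : ℕ} (j : Euc N → ℝ≥0∞) (u : Euc N → ℝ) : ℝ≥0∞ :=
  (1/2 : ℝ≥0∞) * ∫⁻ p : Euc N × Euc N,
    ENNReal.ofReal ((u p.1 - u p.2)^2) * j (p.1 - p.2) ∂(volume.prod volume)

/-- The squared L² norm of u. -/
def l2sq {N : ℕ} (u : Euc N → ℝ) : ℝ≥0∞ := ∫⁻ x, ENNReal.ofReal ((u x)^2)

/-- The squared norm of 𝒟ʲ(ℝᴺ): ‖u‖² = ℰ_j(u,u) + ‖u‖²_{L²}. -/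
def DnormSq {N : ℕ} (j : Euc N → ℝ≥0∞) (u : Euc N → ℝ) : ℝ≥0∞ := Ej j u + l2sq u

/-- Membership in 𝒟ʲ(ℝᴺ) = {u ∈ L² : ℰ_j(u,u) < ∞}. -/
def MemDj {N : ℕ} (j : Euc N → ℝ≥0∞) (u : Euc N → ℝ) : Prop :=
  MemLp u 2 (volume : Measure (Euc N)) ∧ Ej j u < ⊤

/-- Condition (A1): 0 < ∫ min{1,|z|²} j(z) dz < ∞ (evenness stated separately). -/
def CondA1 {N : ℕ} (j : Euc N → ℝ≥0∞) : Prop :=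
  0 < ∫⁻ z, ENNReal.ofReal (min 1 (‖z‖^2)) * j z ∧
    (∫⁻ z, ENNReal.ofReal (min 1 (‖z‖^2)) * j z) < ⊤

/-- The slab (−a,a) × ℝ^{N−1}. -/
def slab {N : ℕ} (hN : 0 < N) (a : ℝ) : Set (Euc N) :=
  {x : Euc N | x ⟨0, hN⟩ ∈ Set.Ioo (-a) a}

/-- C̃_a := ∫_{ℝᴺ∖Ω_{2a}} j(z) dz. -/
def Ctilde {N : ℕ} (hN : 0 < N) (j : Euc N → ℝ≥0∞) (a : ℝ) : ℝ≥0∞ :=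
  ∫⁻ z in (slab hN (2*a))ᶜ, j z

section Aux

open Set

variable {N : ℕ}

lemma slab_eq (hN : 0 < N) (a : ℝ) :
    slab hN a = (fun x : Euc N => x ⟨0, hN⟩) ⁻¹' Set.Ioo (-a) a := rfl

lemma measurable_eval0 (hN : 0 < N) : Measurable (fun x : Euc N => x ⟨0, hN⟩) := by
  have : (fun x : Euc N => x ⟨0, hN⟩) = (EuclideanSpace.proj (𝕜 := ℝ) (⟨0, hN⟩ : Fin N)) := by
    ext x; simp
  rw [this]
  exact (EuclideanSpace.proj _).continuous.measurable

lemma measurableSet_slab (hN : 0 < N) (a : ℝ) : MeasurableSet (slab hN a) :=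
  (measurable_eval0 hN) measurableSet_Ioo

end Aux
section Key

open Set

variable {N : ℕ}

lemma poincare_key (hN : 0 < N) (j : Euc N → ℝ≥0∞) (hj : Measurable j)
    (heven : ∀ z, j (-z) = j z) {a : ℝ} (ha : 0 < a) {u : Euc N → ℝ}
    (hu : Measurable u) (h0 : ∀ᵐ x : Euc N, x ∉ slab hN a → u x = 0) :
    Ctilde hN j a * l2sq u ≤ Ej j u := by
  set μ : Measure (Euc N) := volume with hμ
  set Ω : Set (Euc N) := slab hN a with hΩdef
  have hΩ : MeasurableSet Ω := measurableSet_slab hN a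
  set G : Euc N × Euc N → ℝ≥0∞ :=
    fun p => ENNReal.ofReal ((u p.1 - u p.2)^2) * j (p.1 - p.2) with hGdef
  have hGmeas : Measurable G := by
    apply Measurable.mul
    · exact ENNReal.measurable_ofReal.comp
        (((hu.comp measurable_fst).sub (hu.comp measurable_snd)).pow_const 2)
    · exact hj.comp (measurable_fst.sub measurable_snd)
  -- Step A : l2sq u localized to Ω
  have hOc0 : ∫⁻ x in Ωᶜ, ENNReal.ofReal ((u x)^2) ∂μ = 0 := by
    have hae : ∀ᵐ x ∂μ.restrict Ωᶜ, ENNReal.ofReal ((u x)^2) = 0 := by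
      filter_upwards [ae_restrict_of_ae h0, ae_restrict_mem hΩ.compl] with x hx hmem
      rw [hx hmem]; simp
    rw [lintegral_congr_ae hae, lintegral_zero]
  have hl2 : l2sq u = ∫⁻ x in Ω, ENNReal.ofReal ((u x)^2) ∂μ := by
    rw [l2sq, ← lintegral_add_compl (μ := μ) _ hΩ, hOc0, add_zero]
  -- Step B : inner bound
  have hinner : ∀ x ∈ Ω, Ctilde hN j a ≤ ∫⁻ y in Ωᶜ, j (x - y) ∂μ := by
    intro x hx
    have hmp : MeasurePreserving (fun y : Euc N => x - y) μ μ :=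
      Measure.measurePreserving_sub_left μ x
    have hemb : MeasurableEmbedding (fun y : Euc N => x - y) :=
      (MeasurableEquiv.subLeft x).measurableEmbedding
    have key : ∫⁻ y in (fun y : Euc N => x - y) ⁻¹' ((slab hN (2*a))ᶜ), j (x - y) ∂μ
        = Ctilde hN j a :=
      hmp.setLIntegral_comp_preimage_emb hemb j _
    rw [← key]
    refine lintegral_mono_set ?_
    intro y hy
    simp only [Set.mem_preimage, Set.mem_compl_iff] at hy ⊢
    intro hymem
    apply hy
    have hx' : -a < x ⟨0, hN⟩ ∧ x ⟨0, hN⟩ < a := hx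
    have hy' : -a < y ⟨0, hN⟩ ∧ y ⟨0, hN⟩ < a := hymem
    show -(2*a) < (x - y) ⟨0, hN⟩ ∧ (x - y) ⟨0, hN⟩ < 2*a
    rw [PiLp.sub_apply]
    constructor <;> linarith [hx'.1, hx'.2, hy'.1, hy'.2]
  -- Step C : the integral over Ω ×ˢ Ωᶜ dominates Ctilde * l2sq
  have hinner_eq : ∀ x : Euc N, ∫⁻ y, G (x, y) ∂μ.restrict Ωᶜ
      = ENNReal.ofReal ((u x)^2) * ∫⁻ y in Ωᶜ, j (x - y) ∂μ := by
    intro x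
    have hae : ∀ᵐ y ∂μ.restrict Ωᶜ, G (x, y) = ENNReal.ofReal ((u x)^2) * j (x - y) := by
      filter_upwards [ae_restrict_of_ae h0, ae_restrict_mem hΩ.compl] with y hy hmem
      simp only [hGdef]
      rw [hy hmem, sub_zero]
    rw [lintegral_congr_ae hae, lintegral_const_mul' _ _ ENNReal.ofReal_ne_top]
  have hS : Ctilde hN j a * l2sq u ≤ ∫⁻ p in Ω ×ˢ Ωᶜ, G p ∂(μ.prod μ) := by
    rw [← Measure.prod_restrict, lintegral_prod _ hGmeas.aemeasurable, hl2,
      ← lintegral_const_mul _ (show Measurable fun x : Euc N => ENNReal.ofReal ((u x)^2) from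
        ENNReal.measurable_ofReal.comp (hu.pow_const 2))]
    refine setLIntegral_mono (hGmeas.lintegral_prod_right') ?_
    intro x hx
    rw [hinner_eq x, mul_comm]
    exact mul_le_mul_right (hinner x hx) _
  -- Step D : swap symmetry
  have hswap : ∫⁻ p in Ωᶜ ×ˢ Ω, G p ∂(μ.prod μ) = ∫⁻ p in Ω ×ˢ Ωᶜ, G p ∂(μ.prod μ) := by
    have hpre : Prod.swap ⁻¹' (Ωᶜ ×ˢ Ω) = (Ω ×ˢ Ωᶜ : Set (Euc N × Euc N)) := by
      ext p; simp [Set.mem_prod, and_comm]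
    have hG : ∀ p : Euc N × Euc N, G (Prod.swap p) = G p := by
      intro p
      simp only [hGdef, Prod.swap, Prod.fst, Prod.snd]
      rw [show p.2 - p.1 = -(p.1 - p.2) by abel, heven,
        show u p.2 - u p.1 = -(u p.1 - u p.2) by ring, neg_sq]
    calc ∫⁻ p in Ωᶜ ×ˢ Ω, G p ∂(μ.prod μ)
        = ∫⁻ p in Prod.swap ⁻¹' (Ωᶜ ×ˢ Ω), G (Prod.swap p) ∂(μ.prod μ) :=
          ((Measure.measurePreserving_swap (μ := μ) (ν := μ)).setLIntegral_comp_preimage_emb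
            MeasurableEquiv.prodComm.measurableEmbedding G (Ωᶜ ×ˢ Ω)).symm
      _ = ∫⁻ p in Ω ×ˢ Ωᶜ, G p ∂(μ.prod μ) := by
          rw [hpre]; exact lintegral_congr fun p => hG p
  -- Step E : combine
  have hdisj : Disjoint (Ω ×ˢ Ωᶜ) (Ωᶜ ×ˢ Ω : Set (Euc N × Euc N)) := by
    rw [Set.disjoint_left]
    rintro p ⟨h1, _⟩ ⟨h2, _⟩
    exact h2 h1
  have hunion : ∫⁻ p in (Ω ×ˢ Ωᶜ) ∪ (Ωᶜ ×ˢ Ω), G p ∂(μ.prod μ)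
      = ∫⁻ p in Ω ×ˢ Ωᶜ, G p ∂(μ.prod μ) + ∫⁻ p in Ωᶜ ×ˢ Ω, G p ∂(μ.prod μ) :=
    lintegral_union (hΩ.compl.prod hΩ) hdisj
  have htot : 2 * ∫⁻ p in Ω ×ˢ Ωᶜ, G p ∂(μ.prod μ) ≤ ∫⁻ p, G p ∂(μ.prod μ) := by
    rw [two_mul]
    calc ∫⁻ p in Ω ×ˢ Ωᶜ, G p ∂(μ.prod μ) + ∫⁻ p in Ω ×ˢ Ωᶜ, G p ∂(μ.prod μ)
        = ∫⁻ p in (Ω ×ˢ Ωᶜ) ∪ (Ωᶜ ×ˢ Ω), G p ∂(μ.prod μ) := by rw [hunion, hswap]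
      _ ≤ ∫⁻ p, G p ∂(μ.prod μ) := setLIntegral_le_lintegral _ _
  have h2 : (1/2 : ℝ≥0∞) * (2 * ∫⁻ p in Ω ×ˢ Ωᶜ, G p ∂(μ.prod μ))
      = ∫⁻ p in Ω ×ˢ Ωᶜ, G p ∂(μ.prod μ) := by
    rw [← mul_assoc, one_div, ENNReal.inv_mul_cancel (by norm_num) (by norm_num), one_mul]
  calc Ctilde hN j a * l2sq u ≤ ∫⁻ p in Ω ×ˢ Ωᶜ, G p ∂(μ.prod μ) := hS
    _ = (1/2 : ℝ≥0∞) * (2 * ∫⁻ p in Ω ×ˢ Ωᶜ, G p ∂(μ.prod μ)) := h2.symm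
    _ ≤ (1/2 : ℝ≥0∞) * ∫⁻ p, G p ∂(μ.prod μ) := mul_le_mul_right htot _
    _ = Ej j u := rfl

end Key
section Part2

open Set Filter Topology

variable {N : ℕ}

lemma mem_slab_iff (hN : 0 < N) (b : ℝ) (x : Euc N) :
    x ∈ slab hN b ↔ |x ⟨0, hN⟩| < b := by
  simp [slab, Set.mem_Ioo, abs_lt]

lemma ctilde_tendsto (hN : 0 < N) (j : Euc N → ℝ≥0∞) (hj : Measurable j) :
    Tendsto (fun a : ℝ => Ctilde hN j a) (𝓝[>] 0) (𝓝 (∫⁻ z, j z)) := by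
  set i0 : Fin N := ⟨0, hN⟩ with hi0
  set ν := (volume : Measure (Euc N)).withDensity j with hν
  have hCt : ∀ a : ℝ, Ctilde hN j a = ν ((slab hN (2*a))ᶜ) := fun a =>
    (withDensity_apply j (measurableSet_slab hN (2*a)).compl).symm
  have hνuniv : ν Set.univ = ∫⁻ z, j z := by
    rw [hν, withDensity_apply j MeasurableSet.univ, Measure.restrict_univ]
  -- the hyperplane
  have hHmeas : MeasurableSet {x : Euc N | x i0 = 0} :=
    (measurable_eval0 hN) (measurableSet_singleton 0)
  have hH : (volume : Measure (Euc N)) {x : Euc N | x i0 = 0} = 0 := by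
    have hker : {x : Euc N | x i0 = 0}
        = (LinearMap.ker ((EuclideanSpace.proj i0 : Euc N →L[ℝ] ℝ) : Euc N →ₗ[ℝ] ℝ) :
          Submodule ℝ (Euc N)) := by
      ext x; simp [LinearMap.mem_ker]
    rw [hker]
    apply Measure.addHaar_submodule
    intro htop
    have h1 : EuclideanSpace.single i0 (1:ℝ) ∈
        LinearMap.ker ((EuclideanSpace.proj i0 : Euc N →L[ℝ] ℝ) : Euc N →ₗ[ℝ] ℝ) := by
      rw [htop]; trivial
    have h2 : (EuclideanSpace.single i0 (1:ℝ)) i0 = (1:ℝ) := by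
      simp [EuclideanSpace.single_apply]
    rw [LinearMap.mem_ker] at h1
    have h1' : (EuclideanSpace.single i0 (1:ℝ)) i0 = 0 := h1
    rw [h2] at h1'
    exact one_ne_zero h1'
  have hνH : ν {x : Euc N | x i0 = 0} = 0 := by
    rw [hν, withDensity_apply j hHmeas]
    exact setLIntegral_measure_zero _ _ hH
  have hHc : ν ({x : Euc N | x i0 = 0}ᶜ) = ∫⁻ z, j z := by
    have := measure_add_measure_compl (μ := ν) hHmeas
    rw [hνH, zero_add] at this
    rw [this, hνuniv]
  -- approximating sequence
  set b : ℕ → ℝ := fun n => 1 / (n + 1) with hb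
  have hbpos : ∀ n, 0 < b n := fun n => by positivity
  set s : ℕ → Set (Euc N) := fun n => (slab hN (2 * b n))ᶜ with hs
  have hsmono : Monotone s := by
    intro n m hnm
    apply Set.compl_subset_compl.2
    intro x hx
    rw [mem_slab_iff] at hx ⊢
    have : b m ≤ b n := by
      rw [hb]; apply one_div_le_one_div_of_le (by positivity)
      have := Nat.cast_le (α := ℝ).2 hnm; linarith
    linarith
  have hUnion : (⋃ n, s n) = {x : Euc N | x i0 = 0}ᶜ := by
    ext x
    simp only [Set.mem_iUnion, Set.mem_compl_iff, Set.mem_setOf_eq, hs, mem_slab_iff]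
    constructor
    · rintro ⟨n, hn⟩ hx0
      apply hn; rw [← hi0, hx0]; simpa using by positivity
    · intro hx0
      have habs : 0 < |x i0| := abs_pos.2 hx0
      obtain ⟨n, hn⟩ := exists_nat_gt (2 / |x i0|)
      refine ⟨n, ?_⟩
      rw [not_lt, hb]
      rw [div_lt_iff₀ habs] at hn
      have hn1 : (2:ℝ) < (n + 1) * |x i0| := by
        have : (n:ℝ) * |x i0| ≤ (n+1) * |x i0| := by nlinarith [abs_nonneg (x i0)]
        linarith
      rw [mul_one_div, div_le_iff₀ (by positivity)]
      rw [← hi0]; nlinarith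
  have hsup : ν ({x : Euc N | x i0 = 0}ᶜ) = ⨆ n, ν (s n) := by
    rw [← hUnion]
    exact (hsmono.directed_le).measure_iUnion
  -- the limit
  have hub : ∀ a : ℝ, Ctilde hN j a ≤ ∫⁻ z, j z := fun a => by
    rw [hCt, ← hνuniv]; exact measure_mono (Set.subset_univ _)
  rw [tendsto_order]
  constructor
  · intro c hc
    rw [← hHc, hsup] at hc
    obtain ⟨n, hn⟩ := lt_iSup_iff.1 hc
    filter_upwards [Ioo_mem_nhdsGT_of_mem (Set.mem_Ico.2 ⟨le_refl (0:ℝ), hbpos n⟩)]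
      with a ha
    rw [hCt]
    refine lt_of_lt_of_le hn (measure_mono (Set.compl_subset_compl.2 ?_))
    intro x hx
    rw [mem_slab_iff] at hx ⊢
    have : a ≤ b n := le_of_lt ha.2
    linarith
  · intro c hc
    exact Filter.Eventually.of_forall fun a => lt_of_le_of_lt (hub a) hc

end Part2
/-- ℰ_j(u,u) ≥ C̃_a ∫_{Ω_a} u² for u ∈ 𝒟ʲ(Ω_a), and C̃_a → ∫ j as a → 0⁺. -/
theorem poincare_slab_explicit {N : ℕ} (hN : 0 < N) (j : Euc N → ℝ≥0∞) (hj : Measurable j)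
    (heven : ∀ z, j (-z) = j z) (hA1 : CondA1 j) :
    (∀ a : ℝ, 0 < a → ∀ u : Euc N → ℝ, MemLp u 2 (volume : Measure (Euc N)) →
      Ej j u < ⊤ → (∀ᵐ x : Euc N, x ∉ slab hN a → u x = 0) →
      Ctilde hN j a * l2sq u ≤ Ej j u) ∧
    Tendsto (fun a : ℝ => Ctilde hN j a) (𝓝[>] 0) (𝓝 (∫⁻ z, j z)) := by
  refine ⟨?_, ctilde_tendsto hN j hj⟩
  intro a ha u hL2 _ h0
  set μ : Measure (Euc N) := volume with hμ
  have hsm := hL2.aestronglyMeasurable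
  set v : Euc N → ℝ := hsm.mk u with hv
  have hvmeas : Measurable v := hsm.stronglyMeasurable_mk.measurable
  have hveq : u =ᵐ[μ] v := hsm.ae_eq_mk
  have hl2eq : l2sq u = l2sq v := by
    refine lintegral_congr_ae ?_
    filter_upwards [hveq] with x hx
    rw [hx]
  have hprod1 : ∀ᵐ p : Euc N × Euc N ∂(μ.prod μ), u p.1 = v p.1 :=
    Measure.quasiMeasurePreserving_fst.ae hveq
  have hprod2 : ∀ᵐ p : Euc N × Euc N ∂(μ.prod μ), u p.2 = v p.2 :=
    Measure.quasiMeasurePreserving_snd.ae hveq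
  have hEjeq : Ej j u = Ej j v := by
    unfold Ej
    congr 1
    refine lintegral_congr_ae ?_
    filter_upwards [hprod1, hprod2] with p h1 h2
    rw [h1, h2]
  have h0v : ∀ᵐ x : Euc N ∂μ, x ∉ slab hN a → v x = 0 := by
    filter_upwards [h0, hveq] with x h1 h2 hx
    rw [← h2]
    exact h1 hx
  rw [hl2eq, hEjeq]
  exact poincare_key hN j hj heven ha hvmeas h0v
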